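/- Theorem 1 (empirical error bound for the ridge-type TSLS estimator): Suppose Y = D̂β + Zα + η̂ with D̂ = Zγ̂ ≠ 0, Γ = τ²I, A = Z^T P_{D̂} Z/(nσ_η²), B = (Z^TZ/σ_η² + τ^{-2}I)/n, and c* = Λ_max(AB^{-1}) ∈ (0,1). Let (β̂, α̂) be the minimizer of ‖Y − D̂β − Zα‖₂² + (σ_η²/τ²)‖α − μ_α‖₂². Then |β̂ − β| ≤ c*σ_η²‖γ̂‖₂‖α − μ_α‖₂ / (τ²(1−c*) D̂^TD̂) + c*‖γ̂‖₂‖Z^T P_{D̂}^⊥ η̂‖₂ / ((1−c*) D̂^TD̂) + |D̂^T η̂| / (D̂^TD̂). -/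

import Mathlib

open Matrix

/-- The largest eigenvalue of a real matrix, as the supremum of its real spectrum. -/
noncomputable def lmax {J : ℕ} (M : Matrix (Fin J) (Fin J) ℝ) : ℝ :=
  sSup (spectrum ℝ M)

/-- Euclidean norm of a vector. -/
noncomputable def enorm {k : ℕ} (v : Fin k → ℝ) : ℝ :=
  Real.sqrt (∑ i, v i ^ 2)

section Aux

lemma lin_zero (Q L : ℝ) (hQ : 0 ≤ Q) (h : ∀ t : ℝ, 0 ≤ Q * t ^ 2 + L * t) : L = 0 := by
  have hq1 : (0:ℝ) < Q + 1 := by linarith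
  have h1 := h (-L / (Q + 1))
  have h2 : 0 ≤ (Q * (-L/(Q+1))^2 + L * (-L/(Q+1))) * (Q+1)^2 := by positivity
  have h3 : (Q * (-L/(Q+1))^2 + L * (-L/(Q+1))) * (Q+1)^2 = -(L^2) * (Q+1) + L^2 * Q := by
    field_simp; ring
  nlinarith [sq_nonneg L]

lemma dot_sq_le {k : ℕ} (x y : Fin k → ℝ) : (x ⬝ᵥ y) ^ 2 ≤ (x ⬝ᵥ x) * (y ⬝ᵥ y) := by
  have h := Finset.sum_mul_sq_le_sq_mul_sq Finset.univ x y
  have e1 : x ⬝ᵥ x = ∑ i, x i ^ 2 := by simp [dotProduct, pow_two]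
  have e2 : y ⬝ᵥ y = ∑ i, y i ^ 2 := by simp [dotProduct, pow_two]
  have e3 : x ⬝ᵥ y = ∑ i, x i * y i := rfl
  rw [e1, e2, e3]; exact h

lemma dot_self_nonneg {k : ℕ} (x : Fin k → ℝ) : 0 ≤ x ⬝ᵥ x :=
  Finset.sum_nonneg fun i _ => mul_self_nonneg _

lemma dot_self_pos {k : ℕ} (x : Fin k → ℝ) (hx : x ≠ 0) : 0 < x ⬝ᵥ x := by
  rcases lt_or_eq_of_le (dot_self_nonneg x) with h | h
  · exact h
  · exfalso; apply hx; funext i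
    have := (Finset.sum_eq_zero_iff_of_nonneg (fun i _ => mul_self_nonneg (x i))).mp h.symm
    have := this i (Finset.mem_univ i)
    exact mul_self_eq_zero.mp this

lemma enorm_nonneg {k : ℕ} (v : Fin k → ℝ) : 0 ≤ _root_.enorm v := Real.sqrt_nonneg _

lemma enorm_eq_sqrt_dot {k : ℕ} (v : Fin k → ℝ) : _root_.enorm v = Real.sqrt (v ⬝ᵥ v) := by
  unfold _root_.enorm; congr 1; simp [dotProduct, pow_two]

lemma abs_dot_le {k : ℕ} (v w : Fin k → ℝ) : |v ⬝ᵥ w| ≤ _root_.enorm v * _root_.enorm w := by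
  rw [abs_le]
  have h := dot_sq_le v w
  have key : (v ⬝ᵥ w) ^ 2 ≤ (_root_.enorm v * _root_.enorm w) ^ 2 := by
    have e : (_root_.enorm v * _root_.enorm w) ^ 2 = (v ⬝ᵥ v) * (w ⬝ᵥ w) := by
      rw [mul_pow, enorm_eq_sqrt_dot, enorm_eq_sqrt_dot,
        Real.sq_sqrt (dot_self_nonneg v), Real.sq_sqrt (dot_self_nonneg w)]
    rw [e]; exact h
  have hnn : 0 ≤ _root_.enorm v * _root_.enorm w := mul_nonneg (enorm_nonneg v) (enorm_nonneg w)
  constructor <;> nlinarith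

lemma key_scalar (L a b d e : ℝ) (hL : 0 < L) (ha : 0 ≤ a) (hb : 0 ≤ b) (hd : 0 ≤ d)
    (he : 0 ≤ e) (c1 : b ^ 2 ≤ a * d) (c2 : d ^ 2 ≤ b * e) :
    Real.sqrt d * (e + 2 * L * d + L ^ 2 * b) ≤
      Real.sqrt (d + 2 * L * b + L ^ 2 * a) * (e + L * d) := by
  have hbdae : b * d ≤ a * e := by nlinarith [mul_nonneg hb hd, mul_nonneg ha he]
  have h1 : 0 ≤ e + 2*L*d + L^2*b := by positivity
  have h2 : 0 ≤ e + L*d := by positivity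
  have hX : 0 ≤ d + 2*L*b + L^2*a := by positivity
  have hsq : d * (e + 2*L*d + L^2*b) ^ 2 ≤ (d + 2*L*b + L^2*a) * (e + L*d) ^ 2 := by
    have expand : (d + 2*L*b + L^2*a) * (e + L*d)^2 - d * (e + 2*L*d + L^2*b)^2
        = 2*L*e*(b*e - d^2) + L^2*(a*e^2 + 2*b*d*e - 3*d^3)
          + 2*L^3*d*(a*e - b*d) + L^4*d*(a*d - b^2) := by ring
    have t1 : 0 ≤ 2*L*e*(b*e - d^2) := by
      apply mul_nonneg; positivity; linarith
    have t2 : 0 ≤ a*e^2 + 2*b*d*e - 3*d^3 := by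
      have hbe : d^3 ≤ b*d*e := by nlinarith
      have hae : b*d*e ≤ a*e^2 := by nlinarith [mul_le_mul_of_nonneg_right hbdae he]
      nlinarith
    have t3 : 0 ≤ 2*L^3*d*(a*e - b*d) := by
      apply mul_nonneg; positivity; linarith
    have t4 : 0 ≤ L^4*d*(a*d - b^2) := by
      apply mul_nonneg; positivity; linarith
    nlinarith [mul_nonneg (le_of_lt (by positivity : (0:ℝ) < L^2)) t2]
  calc Real.sqrt d * (e + 2*L*d + L^2*b)
      = Real.sqrt (d * (e + 2*L*d + L^2*b)^2) := by
        rw [Real.sqrt_mul hd, Real.sqrt_sq h1]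
    _ ≤ Real.sqrt ((d + 2*L*b + L^2*a) * (e + L*d)^2) := Real.sqrt_le_sqrt hsq
    _ = Real.sqrt (d + 2*L*b + L^2*a) * (e + L*d) := by
        rw [Real.sqrt_mul hX, Real.sqrt_sq h2]

lemma rank_one_mulVec {J k : ℕ} (s : ℝ) (u : Fin J → ℝ) (v x : Fin k → ℝ)
    : (s • vecMulVec u v) *ᵥ x = (s * (v ⬝ᵥ x)) • u := by
  ext i
  simp only [mulVec, vecMulVec_apply, dotProduct, Pi.smul_apply, smul_eq_mul,
    Matrix.smul_apply, Finset.sum_mul]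
  rw [Finset.mul_sum, Finset.sum_mul]
  apply Finset.sum_congr rfl
  intro j _
  ring

lemma lmax_rank_one {J : ℕ} (s : ℝ) (u v : Fin J → ℝ) (hu : u ≠ 0)
    (c : ℝ) (hc : c = lmax (s • vecMulVec u v)) (hc0 : 0 < c) :
    c = s * (v ⬝ᵥ u) := by
  set R : Matrix (Fin J) (Fin J) ℝ := s • vecMulVec u v with hR
  set t : ℝ := s * (v ⬝ᵥ u) with ht
  have htmem : t ∈ spectrum ℝ R := by
    rw [spectrum.mem_iff]
    intro hunit
    rw [Matrix.isUnit_iff_isUnit_det] at hunit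
    have hker : ((algebraMap ℝ (Matrix (Fin J) (Fin J) ℝ)) t - R) *ᵥ u = 0 := by
      rw [Matrix.sub_mulVec, rank_one_mulVec]
      have : (algebraMap ℝ (Matrix (Fin J) (Fin J) ℝ)) t = t • (1 : Matrix (Fin J) (Fin J) ℝ) := by
        rw [Algebra.algebraMap_eq_smul_one]
      rw [this]
      simp [Matrix.smul_mulVec, Matrix.one_mulVec, ht]
    have : ((algebraMap ℝ (Matrix (Fin J) (Fin J) ℝ)) t - R).det = 0 := by
      rw [← Matrix.exists_mulVec_eq_zero_iff]
      exact ⟨u, hu, hker⟩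
    rw [this] at hunit
    exact hunit.ne_zero rfl
  have hsub : spectrum ℝ R ⊆ {0, t} := by
    intro θ hθ
    rw [spectrum.mem_iff] at hθ
    simp only [Set.mem_insert_iff, Set.mem_singleton_iff]
    by_contra hne
    push_neg at hne
    obtain ⟨hθ0, hθt⟩ := hne
    apply hθ
    rw [Matrix.isUnit_iff_isUnit_det]
    rw [isUnit_iff_ne_zero]
    intro hdet
    rw [← Matrix.exists_mulVec_eq_zero_iff] at hdet
    obtain ⟨x, hx0, hx⟩ := hdet
    have halg : (algebraMap ℝ (Matrix (Fin J) (Fin J) ℝ)) θ = θ • (1 : Matrix (Fin J) (Fin J) ℝ) := by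
      rw [Algebra.algebraMap_eq_smul_one]
    rw [Matrix.sub_mulVec, halg] at hx
    have hx' : θ • x = (s * (v ⬝ᵥ x)) • u := by
      have h1 : (θ • (1 : Matrix (Fin J) (Fin J) ℝ)) *ᵥ x = θ • x := by
        simp [Matrix.smul_mulVec, Matrix.one_mulVec]
      rw [h1, rank_one_mulVec] at hx
      linear_combination (norm := module) hx
    set r : ℝ := s * (v ⬝ᵥ x) / θ with hr
    have hxu : x = r • u := by
      have := congrArg (fun y => θ⁻¹ • y) hx'
      simp only [smul_smul, inv_mul_cancel₀ hθ0, one_smul] at this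
      rw [this]
      congr 1
      rw [hr, div_eq_mul_inv]
      ring
    have hr0 : r ≠ 0 := by
      intro h
      rw [h, zero_smul] at hxu
      exact hx0 hxu
    have : θ • (r • u) = (s * (v ⬝ᵥ (r • u))) • u := by rw [← hxu]; exact hx'
    have hvd : v ⬝ᵥ (r • u) = r * (v ⬝ᵥ u) := by simp [dotProduct_smul, smul_eq_mul]
    rw [hvd] at this
    have : (θ * r - s * (r * (v ⬝ᵥ u))) • u = 0 := by
      rw [sub_smul]
      rw [smul_smul] at this
      rw [this]
      simp
    have hcoef : θ * r - s * (r * (v ⬝ᵥ u)) = 0 := by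
      by_contra h
      exact hu (by simpa [smul_eq_zero, h] using this)
    apply hθt
    have : r * (θ - t) = 0 := by rw [ht]; linarith [hcoef]
    rcases mul_eq_zero.mp this with h | h
    · exact absurd h hr0
    · linarith
  have hne : (spectrum ℝ R).Nonempty := ⟨t, htmem⟩
  have hfin : (spectrum ℝ R).Finite := Set.Finite.subset ((Set.finite_singleton t).insert 0) hsub
  have hmem := hne.csSup_mem hfin
  rw [hc] at hc0 ⊢
  unfold lmax at hc0 ⊢
  rcases hsub hmem with h | h
  · rw [h] at hc0; exact absurd hc0 (lt_irrefl 0)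
  · exact h


lemma vecMulVec_mul {J k : ℕ} (a b : Fin J → ℝ) (C : Matrix (Fin J) (Fin k) ℝ) :
    vecMulVec a b * C = vecMulVec a (Cᵀ *ᵥ b) := by
  ext i j
  simp only [Matrix.mul_apply, vecMulVec_apply, mulVec, dotProduct, transpose_apply]
  rw [Finset.mul_sum]
  apply Finset.sum_congr rfl
  intro l _
  ring

lemma ZPZ_eq {n J : ℕ} (Z : Matrix (Fin n) (Fin J) ℝ) (D : Fin n → ℝ) :
    Zᵀ * vecMulVec D D * Z = vecMulVec (Zᵀ *ᵥ D) (Zᵀ *ᵥ D) := by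
  ext j k
  simp only [Matrix.mul_apply, vecMulVec_apply, transpose_apply, mulVec, dotProduct]
  have inner : ∀ l, (∑ i, Z i j * (D i * D l)) = (∑ i, Z i j * D i) * D l := by
    intro l; rw [Finset.sum_mul]; exact Finset.sum_congr rfl fun i _ => by ring
  calc ∑ l, (∑ i, Z i j * (D i * D l)) * Z l k
      = ∑ l, ((∑ i, Z i j * D i) * (D l * Z l k)) := by
        apply Finset.sum_congr rfl; intro l _; rw [inner l]; ring
    _ = (∑ i, Z i j * D i) * (∑ l, D l * Z l k) := by rw [Finset.mul_sum]
    _ = (∑ i, Z i j * D i) * (∑ l, Z l k * D l) := by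
        congr 1; exact Finset.sum_congr rfl fun l _ => mul_comm _ _

end Aux

set_option maxHeartbeats 2000000 in
/-- Theorem 1: empirical error bound for the ridge-type TSLS
estimator.  With `Y = D̂β + Zα + η̂`, `D̂ = Zγ̂ ≠ 0`,
`A = Zᵀ P_{D̂} Z/(nσ²)`, `B = (ZᵀZ/σ² + τ⁻²I)/n`, `c* = Λ_max(AB⁻¹) ∈ (0,1)`,
and `(β̂, α̂)` minimizing `‖Y − D̂b − Za‖² + (σ²/τ²)‖a − μ_α‖²`, one has
`|β̂ − β| ≤ c*σ²‖γ̂‖‖α − μ_α‖/(τ²(1−c*)D̂ᵀD̂)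
  + c*‖γ̂‖‖Zᵀ P_{D̂}^⊥ η̂‖/((1−c*)D̂ᵀD̂) + |D̂ᵀη̂|/(D̂ᵀD̂)`. -/
theorem stmt_7 {n J : ℕ} (Z : Matrix (Fin n) (Fin J) ℝ) (γ : Fin J → ℝ)
    (D : Fin n → ℝ) (hD : D = Z.mulVec γ) (hD0 : D ≠ 0)
    (β : ℝ) (α μα : Fin J → ℝ) (η Y : Fin n → ℝ)
    (hY : Y = β • D + Z.mulVec α + η)
    (τsq σsq : ℝ) (hτ : 0 < τsq) (hσ : 0 < σsq)
    (P : Matrix (Fin n) (Fin n) ℝ) (hP : P = (D ⬝ᵥ D)⁻¹ • vecMulVec D D)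
    (A B : Matrix (Fin J) (Fin J) ℝ)
    (hA : A = ((n : ℝ) * σsq)⁻¹ • (Zᵀ * P * Z))
    (hB : B = (n : ℝ)⁻¹ • (σsq⁻¹ • (Zᵀ * Z) + τsq⁻¹ • (1 : Matrix (Fin J) (Fin J) ℝ)))
    (c : ℝ) (hc : c = lmax (A * B⁻¹)) (hc0 : 0 < c) (hc1 : c < 1)
    (βh : ℝ) (αh : Fin J → ℝ)
    (hmin : ∀ (b : ℝ) (a : Fin J → ℝ),
      (∑ i, (Y i - βh * D i - Z.mulVec αh i) ^ 2)
          + σsq / τsq * ∑ j, (αh j - μα j) ^ 2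
        ≤ (∑ i, (Y i - b * D i - Z.mulVec a i) ^ 2)
          + σsq / τsq * ∑ j, (a j - μα j) ^ 2) :
    |βh - β| ≤
      c * σsq * _root_.enorm γ * _root_.enorm (fun j => α j - μα j) / (τsq * (1 - c) * (D ⬝ᵥ D))
        + c * _root_.enorm γ * _root_.enorm (Zᵀ.mulVec ((1 - P).mulVec η)) / ((1 - c) * (D ⬝ᵥ D))
        + |D ⬝ᵥ η| / (D ⬝ᵥ D) := by
  -- basic positivity
  have hS : 0 < D ⬝ᵥ D := dot_self_pos D hD0
  set S : ℝ := D ⬝ᵥ D with hSdef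
  set L : ℝ := σsq / τsq with hLdef
  have hL : 0 < L := div_pos hσ hτ
  have h1c : 0 < 1 - c := by linarith
  -- n ≠ 0
  have hn : (0:ℝ) < (n:ℝ) := by
    rcases Nat.eq_zero_or_pos n with h | h
    · exfalso; apply hD0; subst h; funext i; exact i.elim0
    · exact_mod_cast h
  -- matrices
  set K : Matrix (Fin J) (Fin J) ℝ := Zᵀ * Z with hKdef
  set Mm : Matrix (Fin J) (Fin J) ℝ := K + L • (1 : Matrix (Fin J) (Fin J) ℝ) with hMdef
  have hKsymm : Kᵀ = K := by rw [hKdef, transpose_mul, transpose_transpose]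
  have hMsymm : Mmᵀ = Mm := by
    rw [hMdef, transpose_add, hKsymm, transpose_smul, transpose_one]
  -- dot product identities
  have dotK : ∀ (x y : Fin J → ℝ), x ⬝ᵥ (K *ᵥ y) = (Z *ᵥ x) ⬝ᵥ (Z *ᵥ y) := by
    intro x y
    rw [hKdef, ← mulVec_mulVec, dotProduct_mulVec, vecMul_transpose]
  have dotsymm : ∀ (N : Matrix (Fin J) (Fin J) ℝ), Nᵀ = N →
      ∀ (x y : Fin J → ℝ), x ⬝ᵥ (N *ᵥ y) = (N *ᵥ x) ⬝ᵥ y := by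
    intro N hN x y
    rw [dotProduct_mulVec]
    conv_lhs => rw [← hN]
    rw [vecMul_transpose]
  have dotZT : ∀ (x : Fin J → ℝ) (w : Fin n → ℝ), x ⬝ᵥ (Zᵀ *ᵥ w) = (Z *ᵥ x) ⬝ᵥ w := by
    intro x w
    rw [dotProduct_mulVec, vecMul_transpose]
  -- Mm is invertible
  have hMdet : IsUnit Mm.det := by
    rw [isUnit_iff_ne_zero]
    intro hdet
    rw [← Matrix.exists_mulVec_eq_zero_iff] at hdet
    obtain ⟨x, hx0, hx⟩ := hdet
    have h1 : x ⬝ᵥ (Mm *ᵥ x) = (Z *ᵥ x) ⬝ᵥ (Z *ᵥ x) + L * (x ⬝ᵥ x) := by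
      rw [hMdef, Matrix.add_mulVec, dotProduct_add, Matrix.smul_mulVec,
        Matrix.one_mulVec, dotProduct_smul, dotK]
      rfl
    rw [hx, dotProduct_zero] at h1
    have h2 : 0 < (Z *ᵥ x) ⬝ᵥ (Z *ᵥ x) + L * (x ⬝ᵥ x) := by
      have := dot_self_nonneg (Z *ᵥ x)
      have := dot_self_pos x hx0
      nlinarith
    linarith
  -- key vectors
  set u' : Fin J → ℝ := Zᵀ *ᵥ D with hu'def
  set p : Fin J → ℝ := Mm⁻¹ *ᵥ γ with hpdef
  have hp : Mm *ᵥ p = γ := by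
    rw [hpdef, mulVec_mulVec, Matrix.mul_nonsing_inv _ hMdet, one_mulVec]
  set q' : Fin J → ℝ := K *ᵥ p with hq'def
  have hMK : Mm * K = K * Mm := by
    rw [hMdef, Matrix.add_mul, Matrix.mul_add, Matrix.smul_mul, Matrix.mul_smul,
      Matrix.one_mul, Matrix.mul_one]
  have hu'K : u' = K *ᵥ γ := by rw [hu'def, hD, mulVec_mulVec, hKdef]
  have hu'M : Mm *ᵥ q' = u' := by
    rw [hq'def, mulVec_mulVec, hMK, ← mulVec_mulVec, hp, hu'K]
  have hu'0 : u' ≠ 0 := by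
    intro h
    have : γ ⬝ᵥ u' = S := by
      rw [hu'def, dotZT, ← hD, hSdef]
    rw [h, dotProduct_zero] at this
    linarith
  -- compute c
  have hnσ : ((n:ℝ) * σsq) ≠ 0 := by positivity
  have hcS : q' ⬝ᵥ u' = c * S := by
    have hZPZ : Zᵀ * P * Z = S⁻¹ • vecMulVec u' u' := by
      rw [hP, Matrix.mul_smul, Matrix.smul_mul, ZPZ_eq, ← hu'def]
    have hB' : B = ((n : ℝ) * σsq)⁻¹ • Mm := by
      have e1 : (n:ℝ)⁻¹ * σsq⁻¹ = ((n:ℝ) * σsq)⁻¹ := (mul_inv _ _).symm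
      have e2 : (n:ℝ)⁻¹ * τsq⁻¹ = ((n:ℝ) * σsq)⁻¹ * L := by
        rw [hLdef]; field_simp
      rw [hB, hMdef, smul_add, smul_add, smul_smul, smul_smul, smul_smul, e1, e2]
    have hBinv : B⁻¹ = ((n : ℝ) * σsq) • Mm⁻¹ := by
      apply Matrix.inv_eq_right_inv
      rw [hB', Matrix.smul_mul, Matrix.mul_smul, smul_smul,
        inv_mul_cancel₀ hnσ, one_smul, Matrix.mul_nonsing_inv _ hMdet]
    have hq'inv : Mm⁻¹ *ᵥ u' = q' := by
      rw [← hu'M, mulVec_mulVec, Matrix.nonsing_inv_mul _ hMdet, one_mulVec]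
    have hMinvT : Mm⁻¹ᵀ = Mm⁻¹ := by
      rw [Matrix.transpose_nonsing_inv, hMsymm]
    have hAB : A * B⁻¹ = S⁻¹ • vecMulVec u' q' := by
      rw [hA, hZPZ, hBinv, Matrix.smul_mul, Matrix.smul_mul, Matrix.mul_smul,
        smul_smul, smul_smul, _root_.vecMulVec_mul, hMinvT, hq'inv]
      congr 1
      field_simp
    have hcr := lmax_rank_one S⁻¹ u' q' hu'0 c (by rw [hc, hAB]) hc0
    rw [hcr]
    field_simp
  -- stationarity in b
  set r : Fin n → ℝ := fun i => Y i - βh * D i - (Z *ᵥ αh) i with hrdef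
  have hri : ∀ i, r i = Y i - βh * D i - (Z *ᵥ αh) i := fun i => by rw [hrdef]
  have hstatD : D ⬝ᵥ r = 0 := by
    have key : ∀ t : ℝ, 0 ≤ S * t ^ 2 + (-2 * (D ⬝ᵥ r)) * t := by
      intro t
      have h := hmin (βh + t) αh
      have hsum : ∑ i, (Y i - (βh + t) * D i - (Z *ᵥ αh) i) ^ 2
          = (∑ i, (r i) ^ 2) + ((∑ i, D i * D i) * t ^ 2 - (∑ i, D i * r i) * (2 * t)) := by
        calc ∑ i, (Y i - (βh + t) * D i - (Z *ᵥ αh) i) ^ 2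
            = ∑ i, ((r i) ^ 2 + ((D i * D i) * t ^ 2 - (D i * r i) * (2 * t))) :=
              Finset.sum_congr rfl fun i _ => by rw [hri i]; ring
          _ = _ := by
              rw [Finset.sum_add_distrib, Finset.sum_sub_distrib, ← Finset.sum_mul,
                ← Finset.sum_mul]
      have hDr : D ⬝ᵥ r = ∑ i, D i * r i := rfl
      have hDD : S = ∑ i, D i * D i := rfl
      rw [hsum] at h
      rw [hDr, hDD]
      nlinarith [h]
    have := lin_zero S (-2 * (D ⬝ᵥ r)) (le_of_lt hS) key
    linarith
  -- stationarity in a-directions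
  set am : Fin J → ℝ := fun j => αh j - μα j with hamdef
  have hami : ∀ j, am j = αh j - μα j := fun j => by rw [hamdef]
  have hstatq : ∀ q : Fin J → ℝ, (Z *ᵥ q) ⬝ᵥ r = L * (q ⬝ᵥ am) := by
    intro q
    have key : ∀ t : ℝ, 0 ≤ ((Z *ᵥ q) ⬝ᵥ (Z *ᵥ q) + L * (q ⬝ᵥ q)) * t ^ 2
        + (-2 * ((Z *ᵥ q) ⬝ᵥ r) + 2 * L * (q ⬝ᵥ am)) * t := by
      intro t
      have h := hmin βh (fun j => αh j + t * q j)
      have hZa : ∀ i, (Z *ᵥ (fun j => αh j + t * q j)) i = (Z *ᵥ αh) i + t * (Z *ᵥ q) i := by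
        intro i
        have h0 : (fun j => αh j + t * q j) = αh + t • q := by
          funext j; simp [Pi.add_apply, Pi.smul_apply, smul_eq_mul]
        rw [h0, Matrix.mulVec_add, Matrix.mulVec_smul]
        simp [Pi.add_apply, Pi.smul_apply, smul_eq_mul]
      have hsum1 : ∑ i, (Y i - βh * D i - (Z *ᵥ (fun j => αh j + t * q j)) i) ^ 2
          = (∑ i, (r i) ^ 2) + ((∑ i, (Z *ᵥ q) i * (Z *ᵥ q) i) * t ^ 2
            - (∑ i, (Z *ᵥ q) i * r i) * (2 * t)) := by
        calc ∑ i, (Y i - βh * D i - (Z *ᵥ (fun j => αh j + t * q j)) i) ^ 2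
            = ∑ i, ((r i) ^ 2 + (((Z *ᵥ q) i * (Z *ᵥ q) i) * t ^ 2
                - ((Z *ᵥ q) i * r i) * (2 * t))) :=
              Finset.sum_congr rfl fun i _ => by rw [hZa i, hri i]; ring
          _ = _ := by
              rw [Finset.sum_add_distrib, Finset.sum_sub_distrib, ← Finset.sum_mul,
                ← Finset.sum_mul]
      have hsum2 : ∑ j, ((αh j + t * q j) - μα j) ^ 2
          = (∑ j, (am j) ^ 2) + ((∑ j, q j * q j) * t ^ 2 + (∑ j, q j * am j) * (2 * t)) := by
        calc ∑ j, ((αh j + t * q j) - μα j) ^ 2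
            = ∑ j, ((am j) ^ 2 + ((q j * q j) * t ^ 2 + (q j * am j) * (2 * t))) :=
              Finset.sum_congr rfl fun j _ => by rw [hami j]; ring
          _ = _ := by
              rw [Finset.sum_add_distrib, Finset.sum_add_distrib, ← Finset.sum_mul,
                ← Finset.sum_mul]
      have hpen : ∑ j, (αh j - μα j) ^ 2 = ∑ j, (am j) ^ 2 :=
        Finset.sum_congr rfl fun j _ => by rw [hami j]
      rw [hsum1, hsum2, hpen] at h
      have e1 : (Z *ᵥ q) ⬝ᵥ (Z *ᵥ q) = ∑ i, (Z *ᵥ q) i * (Z *ᵥ q) i := rfl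
      have e2 : (Z *ᵥ q) ⬝ᵥ r = ∑ i, (Z *ᵥ q) i * r i := rfl
      have e3 : q ⬝ᵥ q = ∑ j, q j * q j := rfl
      have e4 : q ⬝ᵥ am = ∑ j, q j * am j := rfl
      rw [e1, e2, e3, e4]
      nlinarith [h]
    have hQnn : 0 ≤ (Z *ᵥ q) ⬝ᵥ (Z *ᵥ q) + L * (q ⬝ᵥ q) := by
      have := dot_self_nonneg (Z *ᵥ q)
      have := dot_self_nonneg q
      nlinarith
    have := lin_zero _ _ hQnn key
    linarith
  -- residual decomposition
  set δ : Fin J → ℝ := fun j => αh j - α j with hδdef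
  set m : Fin J → ℝ := fun j => α j - μα j with hmdef
  have hrdec : ∀ i, r i = (β - βh) * D i - (Z *ᵥ δ) i + η i := by
    intro i
    have hZδ : (Z *ᵥ δ) i = (Z *ᵥ αh) i - (Z *ᵥ α) i := by
      have : δ = αh - α := rfl
      rw [this, Matrix.mulVec_sub]; rfl
    have hYi : Y i = β * D i + (Z *ᵥ α) i + η i := by rw [hY]; rfl
    rw [hrdef]; simp only []; rw [hYi, hZδ]; ring
  -- equation (i)
  have hDZδ : D ⬝ᵥ (Z *ᵥ δ) = u' ⬝ᵥ δ := by
    rw [dotProduct_comm D (Z *ᵥ δ), ← dotZT δ D, ← hu'def, dotProduct_comm]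
  have hbeq : (βh - β) * S = -(u' ⬝ᵥ δ) + D ⬝ᵥ η := by
    have h0 : D ⬝ᵥ r = (β - βh) * S - u' ⬝ᵥ δ + D ⬝ᵥ η := by
      calc D ⬝ᵥ r = ∑ i, D i * ((β - βh) * D i - (Z *ᵥ δ) i + η i) :=
            Finset.sum_congr rfl fun i _ => by rw [hrdec i]
        _ = ∑ i, ((β - βh) * (D i * D i) - D i * (Z *ᵥ δ) i + D i * η i) :=
            Finset.sum_congr rfl fun i _ => by ring
        _ = (β - βh) * (∑ i, D i * D i) - (∑ i, D i * (Z *ᵥ δ) i) + ∑ i, D i * η i := by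
            rw [Finset.sum_add_distrib, Finset.sum_sub_distrib, ← Finset.mul_sum]
        _ = (β - βh) * S - u' ⬝ᵥ δ + D ⬝ᵥ η := by
            have e1 : S = ∑ i, D i * D i := rfl
            have e2 : D ⬝ᵥ (Z *ᵥ δ) = ∑ i, D i * (Z *ᵥ δ) i := rfl
            have e3 : D ⬝ᵥ η = ∑ i, D i * η i := rfl
            rw [← e1, ← e2, ← e3, hDZδ]
    linear_combination h0 - hstatD
  -- equation (ii)
  have hueq : (1 - c) * (u' ⬝ᵥ δ) = q' ⬝ᵥ (Zᵀ *ᵥ η) - c * (D ⬝ᵥ η) - L * (q' ⬝ᵥ m) := by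
    have E1 : (Z *ᵥ q') ⬝ᵥ r = L * (q' ⬝ᵥ δ) + L * (q' ⬝ᵥ m) := by
      rw [hstatq q']
      have : q' ⬝ᵥ am = q' ⬝ᵥ δ + q' ⬝ᵥ m := by
        have e : ∀ j, q' j * am j = q' j * δ j + q' j * m j := by
          intro j; rw [hami j]; show _ = q' j * (αh j - α j) + q' j * (α j - μα j); ring
        calc q' ⬝ᵥ am = ∑ j, (q' j * δ j + q' j * m j) :=
              Finset.sum_congr rfl fun j _ => e j
          _ = q' ⬝ᵥ δ + q' ⬝ᵥ m := Finset.sum_add_distrib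
      rw [this]; ring
    have E2 : (Z *ᵥ q') ⬝ᵥ r
        = (β - βh) * (q' ⬝ᵥ u') - q' ⬝ᵥ (K *ᵥ δ) + q' ⬝ᵥ (Zᵀ *ᵥ η) := by
      calc (Z *ᵥ q') ⬝ᵥ r = ∑ i, (Z *ᵥ q') i * ((β - βh) * D i - (Z *ᵥ δ) i + η i) :=
            Finset.sum_congr rfl fun i _ => by rw [hrdec i]
        _ = ∑ i, ((β - βh) * ((Z *ᵥ q') i * D i) - (Z *ᵥ q') i * (Z *ᵥ δ) i
              + (Z *ᵥ q') i * η i) :=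
            Finset.sum_congr rfl fun i _ => by ring
        _ = (β - βh) * (∑ i, (Z *ᵥ q') i * D i) - (∑ i, (Z *ᵥ q') i * (Z *ᵥ δ) i)
              + ∑ i, (Z *ᵥ q') i * η i := by
            rw [Finset.sum_add_distrib, Finset.sum_sub_distrib, ← Finset.mul_sum]
        _ = (β - βh) * ((Z *ᵥ q') ⬝ᵥ D) - ((Z *ᵥ q') ⬝ᵥ (Z *ᵥ δ)) + (Z *ᵥ q') ⬝ᵥ η := rfl
        _ = (β - βh) * (q' ⬝ᵥ u') - q' ⬝ᵥ (K *ᵥ δ) + q' ⬝ᵥ (Zᵀ *ᵥ η) := by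
            rw [← dotK q' δ, ← dotZT q' η]
            congr 2
            rw [hu'def, dotZT q' D]
    have E3 : q' ⬝ᵥ (K *ᵥ δ) + L * (q' ⬝ᵥ δ) = u' ⬝ᵥ δ := by
      have hMδ : Mm *ᵥ δ = K *ᵥ δ + L • δ := by
        rw [hMdef, Matrix.add_mulVec, Matrix.smul_mulVec, Matrix.one_mulVec]
      have h1 : q' ⬝ᵥ (Mm *ᵥ δ) = u' ⬝ᵥ δ := by
        rw [dotsymm Mm hMsymm q' δ, hu'M]
      rw [hMδ, dotProduct_add, dotProduct_smul, smul_eq_mul] at h1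
      linarith
    linear_combination E2 - E1 - E3 + (β - βh) * hcS - c * hbeq
  -- w₁ identity
  set w₁ : Fin J → ℝ := Zᵀ.mulVec ((1 - P).mulVec η) with hw₁def
  have hw₁ : q' ⬝ᵥ w₁ = q' ⬝ᵥ (Zᵀ *ᵥ η) - c * (D ⬝ᵥ η) := by
    have h1 : (1 - P) *ᵥ η = η - (S⁻¹ * (D ⬝ᵥ η)) • D := by
      rw [Matrix.sub_mulVec, Matrix.one_mulVec, hP, rank_one_mulVec]
    have h2 : w₁ = Zᵀ *ᵥ η - (S⁻¹ * (D ⬝ᵥ η)) • u' := by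
      rw [hw₁def, h1, Matrix.mulVec_sub, Matrix.mulVec_smul, hu'def]
    rw [h2, dotProduct_sub, dotProduct_smul, smul_eq_mul]
    have h3 : S⁻¹ * (D ⬝ᵥ η) * (q' ⬝ᵥ u') = c * (D ⬝ᵥ η) := by
      rw [hcS]
      field_simp
    rw [h3]
  -- claim C
  have hclaimC : _root_.enorm q' ≤ c * _root_.enorm γ := by
    set a : ℝ := p ⬝ᵥ p with hadef
    set b' : ℝ := (Z *ᵥ p) ⬝ᵥ (Z *ᵥ p) with hb'def
    set d : ℝ := q' ⬝ᵥ q' with hddef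
    set e : ℝ := (Z *ᵥ q') ⬝ᵥ (Z *ᵥ q') with hedef
    have hpq : p ⬝ᵥ q' = b' := by rw [hq'def, dotK p p]
    have hd2 : (Z *ᵥ p) ⬝ᵥ (Z *ᵥ q') = d := by
      rw [← dotK p q', dotsymm K hKsymm p q', ← hq'def]
    have he : q' ⬝ᵥ (K *ᵥ q') = e := dotK q' q'
    have hγq : γ = q' + L • p := by
      rw [← hp, hMdef, Matrix.add_mulVec, Matrix.smul_mulVec, Matrix.one_mulVec, hq'def]
    have hγγ : γ ⬝ᵥ γ = d + 2 * L * b' + L ^ 2 * a := by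
      rw [hγq, dotProduct_add, add_dotProduct, add_dotProduct, dotProduct_smul,
        smul_dotProduct, smul_dotProduct, dotProduct_smul]
      rw [dotProduct_comm q' p, hpq]
      simp only [smul_eq_mul]
      ring
    have hDZγ : D ⬝ᵥ D = (Z *ᵥ γ) ⬝ᵥ (Z *ᵥ γ) := by rw [hD]
    have hZγ : Z *ᵥ γ = Z *ᵥ q' + L • (Z *ᵥ p) := by
      rw [hγq, Matrix.mulVec_add, Matrix.mulVec_smul]
    have hSm : S = e + 2 * L * d + L ^ 2 * b' := by
      rw [hSdef, hDZγ, hZγ, dotProduct_add, add_dotProduct, add_dotProduct,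
        dotProduct_smul, smul_dotProduct, smul_dotProduct, dotProduct_smul]
      rw [dotProduct_comm (Z *ᵥ q') (Z *ᵥ p), hd2]
      simp only [smul_eq_mul]
      ring
    have huq : u' ⬝ᵥ q' = e + L * d := by
      rw [← hu'M, hMdef, Matrix.add_mulVec, Matrix.smul_mulVec, Matrix.one_mulVec,
        add_dotProduct, smul_dotProduct]
      rw [dotProduct_comm (K *ᵥ q') q', he]
      simp only [smul_eq_mul]
      rfl
    have ha0 : 0 ≤ a := dot_self_nonneg p
    have hb0 : 0 ≤ b' := dot_self_nonneg (Z *ᵥ p)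
    have hd0 : 0 ≤ d := dot_self_nonneg q'
    have he0 : 0 ≤ e := dot_self_nonneg (Z *ᵥ q')
    have c1 : b' ^ 2 ≤ a * d := by
      have h := dot_sq_le p q'
      rw [hpq] at h
      exact h
    have c2 : d ^ 2 ≤ b' * e := by
      have h := dot_sq_le (Z *ᵥ p) (Z *ᵥ q')
      rw [hd2] at h
      exact h
    have hk := key_scalar L a b' d e hL ha0 hb0 hd0 he0 c1 c2
    have heq1 : _root_.enorm q' = Real.sqrt d := by rw [enorm_eq_sqrt_dot]
    have heq2 : _root_.enorm γ = Real.sqrt (d + 2 * L * b' + L ^ 2 * a) := by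
      rw [enorm_eq_sqrt_dot, hγγ]
    have hqu : q' ⬝ᵥ u' = e + L * d := by rw [dotProduct_comm]; exact huq
    have hfin : _root_.enorm q' * S ≤ _root_.enorm γ * (c * S) := by
      rw [heq1, heq2, ← hcS, hqu, hSm]
      exact hk
    have := le_of_mul_le_mul_right (by rw [mul_comm (_root_.enorm q') S, mul_comm _ S] at hfin ⊢; linarith [hfin] : _root_.enorm q' * S ≤ (c * _root_.enorm γ) * S) hS
    exact this
  -- final arithmetic
  set G : ℝ := _root_.enorm γ with hGdef
  set W₁ : ℝ := _root_.enorm w₁ with hW₁def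
  set Mn : ℝ := _root_.enorm m with hMndef
  have hG0 : 0 ≤ G := enorm_nonneg γ
  have hW0 : 0 ≤ W₁ := enorm_nonneg w₁
  have hM0 : 0 ≤ Mn := enorm_nonneg m
  have hq0 : 0 ≤ _root_.enorm q' := enorm_nonneg q'
  have hβ : βh - β = (D ⬝ᵥ η - u' ⬝ᵥ δ) / S := by
    rw [eq_div_iff hS.ne']
    linarith [hbeq]
  have hud : |u' ⬝ᵥ δ| ≤ (_root_.enorm q' * W₁ + L * (_root_.enorm q' * Mn)) / (1 - c) := by
    rw [le_div_iff₀ h1c]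
    have h1 : (1 - c) * (u' ⬝ᵥ δ) = q' ⬝ᵥ w₁ - L * (q' ⬝ᵥ m) := by
      linear_combination hueq - hw₁
    calc |u' ⬝ᵥ δ| * (1 - c) = |(1 - c) * (u' ⬝ᵥ δ)| := by
          rw [abs_mul, abs_of_pos h1c]; ring
      _ = |q' ⬝ᵥ w₁ - L * (q' ⬝ᵥ m)| := by rw [h1]
      _ ≤ |q' ⬝ᵥ w₁| + |L * (q' ⬝ᵥ m)| := by
          rw [sub_eq_add_neg]
          exact (abs_add_le _ _).trans (by rw [abs_neg])
      _ = |q' ⬝ᵥ w₁| + L * |q' ⬝ᵥ m| := by rw [abs_mul, abs_of_pos hL]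
      _ ≤ _root_.enorm q' * W₁ + L * (_root_.enorm q' * Mn) := by
          have h2 := abs_dot_le q' w₁
          have h3 := abs_dot_le q' m
          have h4 := mul_le_mul_of_nonneg_left h3 hL.le
          rw [hW₁def, hMndef]
          linarith
  have htri : |D ⬝ᵥ η - u' ⬝ᵥ δ| ≤ |u' ⬝ᵥ δ| + |D ⬝ᵥ η| := by
    rw [sub_eq_add_neg]
    have := (abs_add_le (D ⬝ᵥ η) (-(u' ⬝ᵥ δ))).trans (by rw [abs_neg])
    linarith
  have step1 : |βh - β| ≤ (|u' ⬝ᵥ δ| + |D ⬝ᵥ η|) / S := by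
    rw [hβ, abs_div, abs_of_pos hS]
    gcongr
  have hnum : _root_.enorm q' * W₁ + L * (_root_.enorm q' * Mn) ≤ c * G * W₁ + L * (c * G * Mn) := by
    have h1 := mul_le_mul_of_nonneg_right hclaimC hW0
    have h2 := mul_le_mul_of_nonneg_right hclaimC hM0
    have h3 := mul_le_mul_of_nonneg_left h2 hL.le
    linarith
  have hud2 : |u' ⬝ᵥ δ| ≤ (c * G * W₁ + L * (c * G * Mn)) / (1 - c) :=
    hud.trans ((div_le_div_iff_of_pos_right h1c).mpr hnum)
  have step2 : (|u' ⬝ᵥ δ| + |D ⬝ᵥ η|) / S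
      ≤ ((c * G * W₁ + L * (c * G * Mn)) / (1 - c) + |D ⬝ᵥ η|) / S := by
    gcongr
  have hre : c * σsq * G * Mn / (τsq * (1 - c) * S) + c * G * W₁ / ((1 - c) * S)
      + |D ⬝ᵥ η| / S = ((c * G * W₁ + L * (c * G * Mn)) / (1 - c) + |D ⬝ᵥ η|) / S := by
    rw [hLdef]
    field_simp
    ring
  rw [hre]
  exact step1.trans step2
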